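/- arXiv:2508.10495 — 3 statements merged into one kernel-verified Lean document; each statement's English description precedes it below -/
import Mathlib

section
/- Let W_f ∈ ℂ with W_f ≠ 0, and let N_R + i N_I be a circularly symmetric complex Gaussian random variable where N_R, N_I are independent N(0, σ²). Set W_Y = W_f + (N_R + i N_I) e^{i arg(W_f)} and q = |W_f|²/(2σ²). Then for any ε > 0, P( | |W_Y|/|W_f| − 1 | > ε ) ≤ exp(−(ε²/16) q) + exp(−(ε/2) q). -/
open MeasureTheory ProbabilityTheory Real Complex
open scoped NNReal ENNReal

lemma my_gauss_neg (v : ℝ≥0) :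
    (gaussianReal 0 v).map (fun x : ℝ => -x) = gaussianReal 0 v := by
  have h := gaussianReal_map_const_mul (μ := 0) (v := v) (-1)
  have h2 : (NNReal.mk ((-1:ℝ)^2) (sq_nonneg _) : ℝ≥0) = 1 := by ext; norm_num
  rw [h2, one_mul, mul_zero] at h
  simpa [neg_one_mul] using h

lemma my_gauss_half (v : ℝ≥0) (hv : v ≠ 0) :
    gaussianReal 0 v (Set.Ici (0:ℝ)) ≤ 1/2 := by
  set m := gaussianReal 0 v with hm
  have hsymm : m (Set.Iic (0:ℝ)) = m (Set.Ici (0:ℝ)) := by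
    conv_lhs => rw [hm, ← my_gauss_neg v]
    rw [Measure.map_apply measurable_neg measurableSet_Iic]
    congr 1
    ext x
    simp [neg_nonpos]
  have hU : m (Set.Ici (0:ℝ) ∪ Set.Iic 0) = 1 := by
    rw [Set.union_comm, Set.Iic_union_Ici]
    exact measure_univ
  have hI : m (Set.Ici (0:ℝ) ∩ Set.Iic 0) = 0 := by
    rw [Set.Ici_inter_Iic, Set.Icc_self]
    exact (gaussianReal_absolutelyContinuous 0 hv) Real.volume_singleton
  have key := measure_union_add_inter (μ := m) (Set.Ici (0:ℝ)) (measurableSet_Iic (a := (0:ℝ)))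
  rw [hU, hI, add_zero, hsymm] at key
  rw [ENNReal.le_div_iff_mul_le (by norm_num) (by norm_num), mul_two, key]

lemma my_gauss_tail (v : ℝ≥0) (hv : v ≠ 0) (t : ℝ) (ht : 0 ≤ t) :
    gaussianReal 0 v (Set.Ici t) ≤ ENNReal.ofReal (rexp (-t^2/(2*(v:ℝ))) / 2) := by
  have hvpos : (0:ℝ) < v := NNReal.coe_pos.mpr (pos_iff_ne_zero.mpr hv)
  rw [gaussianReal_apply 0 hv]
  have hpt : ∀ x ∈ Set.Ici t, gaussianPDF 0 v x
      ≤ ENNReal.ofReal (rexp (-t^2/(2*(v:ℝ)))) * gaussianPDF t v x := by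
    intro x hx
    simp only [Set.mem_Ici] at hx
    rw [gaussianPDF, gaussianPDF, ← ENNReal.ofReal_mul (by positivity)]
    apply ENNReal.ofReal_le_ofReal
    rw [gaussianPDFReal, gaussianPDFReal]
    have hC : (0:ℝ) ≤ (√(2*π*(v:ℝ)))⁻¹ := by positivity
    have hexp : rexp (-(x-0)^2/(2*(v:ℝ)))
        ≤ rexp (-t^2/(2*(v:ℝ))) * rexp (-(x-t)^2/(2*(v:ℝ))) := by
      rw [← Real.exp_add]
      apply Real.exp_le_exp.mpr
      rw [← add_div, div_le_div_iff_of_pos_right (by positivity)]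
      nlinarith [mul_nonneg ht (sub_nonneg.mpr hx)]
    calc (√(2*π*(v:ℝ)))⁻¹ * rexp (-(x-0)^2/(2*(v:ℝ)))
        ≤ (√(2*π*(v:ℝ)))⁻¹ * (rexp (-t^2/(2*(v:ℝ))) * rexp (-(x-t)^2/(2*(v:ℝ)))) :=
          mul_le_mul_of_nonneg_left hexp hC
      _ = rexp (-t^2/(2*(v:ℝ))) * ((√(2*π*(v:ℝ)))⁻¹ * rexp (-(x-t)^2/(2*(v:ℝ)))) := by ring
  refine le_trans (setLIntegral_mono ((measurable_gaussianPDF t v).const_mul _) hpt) ?_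
  rw [lintegral_const_mul _ (measurable_gaussianPDF t v)]
  have h1 : ∫⁻ x in Set.Ici t, gaussianPDF t v x = gaussianReal t v (Set.Ici t) :=
    (gaussianReal_apply t hv _).symm
  have htrans : gaussianReal t v (Set.Ici t) = gaussianReal 0 v (Set.Ici 0) := by
    have h2 := gaussianReal_map_add_const (μ := 0) (v := v) t
    rw [zero_add] at h2
    rw [← h2, Measure.map_apply (measurable_add_const t) measurableSet_Ici]
    congr 1
    ext x
    simp
  rw [h1, htrans]
  calc ENNReal.ofReal (rexp (-t^2/(2*(v:ℝ)))) * gaussianReal 0 v (Set.Ici 0)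
      ≤ ENNReal.ofReal (rexp (-t^2/(2*(v:ℝ)))) * (1/2) := by
        gcongr
        exact my_gauss_half v hv
    _ = ENNReal.ofReal (rexp (-t^2/(2*(v:ℝ))) / 2) := by
        rw [ENNReal.ofReal_div_of_pos (by norm_num), ENNReal.ofReal_ofNat, one_div, div_eq_mul_inv, div_eq_mul_inv]

lemma my_rv_tail {Ω : Type*} [MeasurableSpace Ω] (μ : Measure Ω) [IsProbabilityMeasure μ]
    (X : Ω → ℝ) (v : ℝ≥0) (hv : v ≠ 0) (hX : Measure.map X μ = gaussianReal 0 v)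
    (t : ℝ) (ht : 0 ≤ t) :
    μ {ω | t ≤ X ω} ≤ ENNReal.ofReal (rexp (-t^2/(2*(v:ℝ))) / 2) := by
  have hXm : AEMeasurable X μ := by
    by_contra h
    rw [Measure.map_of_not_aemeasurable h] at hX
    have h1 : gaussianReal 0 v Set.univ = 1 := measure_univ
    rw [← hX] at h1
    simp at h1
  have hset : μ {ω | t ≤ X ω} = Measure.map X μ (Set.Ici t) := by
    rw [Measure.map_apply_of_aemeasurable hXm measurableSet_Ici]
    rfl
  rw [hset, hX]
  exact my_gauss_tail v hv t ht

lemma my_rv_tail_neg {Ω : Type*} [MeasurableSpace Ω] (μ : Measure Ω) [IsProbabilityMeasure μ]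
    (X : Ω → ℝ) (v : ℝ≥0) (hv : v ≠ 0) (hX : Measure.map X μ = gaussianReal 0 v)
    (t : ℝ) (ht : 0 ≤ t) :
    μ {ω | t ≤ -X ω} ≤ ENNReal.ofReal (rexp (-t^2/(2*(v:ℝ))) / 2) := by
  have hXm : AEMeasurable X μ := by
    by_contra h
    rw [Measure.map_of_not_aemeasurable h] at hX
    have h1 : gaussianReal 0 v Set.univ = 1 := measure_univ
    rw [← hX] at h1
    simp at h1
  have hmap : Measure.map (fun ω => -X ω) μ = gaussianReal 0 v := by
    have : Measure.map (fun ω => -X ω) μ = (Measure.map X μ).map (fun x : ℝ => -x) := by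
      rw [AEMeasurable.map_map_of_aemeasurable measurable_neg.aemeasurable hXm]
      rfl
    rw [this, hX, my_gauss_neg]
  exact my_rv_tail μ (fun ω => -X ω) v hv hmap t ht

set_option maxHeartbeats 800000 in
theorem stmt5 {Ω : Type*} [MeasurableSpace Ω] (μ : Measure Ω) [IsProbabilityMeasure μ]
    (NR NI : Ω → ℝ) (σ : ℝ) (hσ : 0 < σ)
    (hNR : Measure.map NR μ = gaussianReal 0 (Real.toNNReal (σ^2)))
    (hNI : Measure.map NI μ = gaussianReal 0 (Real.toNNReal (σ^2)))
    (hindep : IndepFun NR NI μ)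
    (Wf : ℂ) (hWf : Wf ≠ 0)
    (WY : Ω → ℂ)
    (hWY : ∀ ω, WY ω = Wf + ((NR ω : ℂ) + (NI ω : ℂ) * Complex.I)
      * Complex.exp ((Complex.arg Wf : ℂ) * Complex.I))
    (q : ℝ) (hq : q = (‖Wf‖)^2 / (2 * σ^2))
    (ε : ℝ) (hε : 0 < ε) :
    μ {ω | |‖WY ω‖ / ‖Wf‖ - 1| > ε}
      ≤ ENNReal.ofReal (Real.exp (-(ε^2/16) * q) + Real.exp (-(ε/2) * q)) := by
  set a := ‖Wf‖ with ha_def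
  have ha : 0 < a := norm_pos_iff.mpr hWf
  have hσ2 : (0:ℝ) < σ^2 := by positivity
  set v := Real.toNNReal (σ^2) with hv_def
  have hvr : (v:ℝ) = σ^2 := Real.coe_toNNReal _ hσ2.le
  have hv : v ≠ 0 := by
    intro h
    rw [h] at hvr
    simp at hvr
    exact absurd hvr.symm hσ2.ne'
  have hq0 : 0 ≤ q := by rw [hq]; positivity
  set δ := Real.sqrt (1 + 3/2*ε + ε^2) - 1 with hδ_def
  have harg : (0:ℝ) ≤ 1 + 3/2*ε + ε^2 := by positivity
  have hδ1 : 1 + δ = Real.sqrt (1 + 3/2*ε + ε^2) := by rw [hδ_def]; ring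
  have hδsq : (1+δ)^2 = 1 + 3/2*ε + ε^2 := by rw [hδ1, Real.sq_sqrt harg]
  have hδ4 : ε/4 ≤ δ := by
    have h1 : (1 + ε/4)^2 ≤ 1 + 3/2*ε + ε^2 := by nlinarith
    have h2 : 1 + ε/4 ≤ Real.sqrt (1 + 3/2*ε + ε^2) :=
      (Real.le_sqrt (by positivity) harg).mpr h1
    linarith [hδ1 ▸ h2]
  clear_value δ
  have hδpos : 0 < δ := lt_of_lt_of_le (by positivity) hδ4
  have hδε : ε ≤ 2 + δ := by
    by_contra h
    push_neg at h
    nlinarith [hδsq, mul_pos (show (0:ℝ) < ε - 2 - δ by linarith)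
      (show (0:ℝ) < ε + δ by linarith)]
  set c := Real.sqrt (ε/2) * a with hc_def
  have hc0 : 0 ≤ c := by positivity
  have hcsq : c^2 = (ε/2) * a^2 := by
    rw [hc_def, mul_pow, Real.sq_sqrt (by positivity : (0:ℝ) ≤ ε/2)]
  clear_value c
  -- event inclusion
  have hsub : {ω | |‖WY ω‖ / a - 1| > ε} ⊆
      ({ω | ε*a ≤ -NR ω} ∪ {ω | δ*a ≤ NR ω}) ∪ ({ω | c ≤ NI ω} ∪ {ω | c ≤ -NI ω}) := by
    intro ω hω
    simp only [Set.mem_setOf_eq, gt_iff_lt] at hω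
    simp only [Set.mem_union, Set.mem_setOf_eq]
    set e := Complex.exp ((Complex.arg Wf : ℂ) * Complex.I) with he_def
    have hWfeq : (a:ℂ) * e = Wf := Complex.norm_mul_exp_arg_mul_I Wf
    have h1 : WY ω = (((a + NR ω : ℝ) : ℂ) + (NI ω : ℂ) * Complex.I) * e := by
      rw [hWY ω, ← hWfeq]
      push_cast
      ring
    have habs : ‖WY ω‖ = Real.sqrt ((a + NR ω)^2 + NI ω^2) := by
      rw [h1, norm_mul, he_def, Complex.norm_exp_ofReal_mul_I, mul_one, Complex.norm_add_mul_I]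
    rcases lt_abs.mp hω with hpos | hneg
    · -- upper tail : ε < abs/a - 1
      have hgt : (1+ε)*a < ‖WY ω‖ := by
        have h2 : 1 + ε < ‖WY ω‖ / a := by linarith
        exact (lt_div_iff₀ ha).mp h2
      by_cases hi1 : c ≤ NI ω
      · exact Or.inr (Or.inl hi1)
      by_cases hi2 : c ≤ -NI ω
      · exact Or.inr (Or.inr hi2)
      push_neg at hi1 hi2
      have hienn : NI ω^2 < (ε/2) * a^2 := by
        rw [← hcsq]
        exact sq_lt_sq' (by linarith) hi1
      have hsq : ((1+ε)*a)^2 < (a + NR ω)^2 + NI ω^2 := by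
        have h0 : (0:ℝ) ≤ (1+ε)*a := by positivity
        have h3 := hgt
        rw [habs] at h3
        exact (Real.lt_sqrt h0).mp h3
      have hgt2 : ((1+δ)*a)^2 < (a + NR ω)^2 := by
        have h4 : ((1+δ)*a)^2 = (1 + 3/2*ε + ε^2) * a^2 := by rw [mul_pow, hδsq]
        nlinarith [hsq, hienn]
      have habs2 : (1+δ)*a < |a + NR ω| := by
        refine lt_of_pow_lt_pow_left₀ 2 (abs_nonneg _) ?_
        rw [_root_.sq_abs]
        exact hgt2
      rcases lt_abs.mp habs2 with h | h
      · exact Or.inl (Or.inr (by nlinarith [ha]))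
      · refine Or.inl (Or.inl ?_)
        nlinarith [hδε, ha, h]
    · -- lower tail : abs/a - 1 < -ε
      have hlt : ‖WY ω‖ < (1-ε)*a := by
        have h2 : ‖WY ω‖ / a < 1 - ε := by linarith
        exact (div_lt_iff₀ ha).mp h2
      have hre : a + NR ω ≤ ‖WY ω‖ := by
        rw [habs]
        calc a + NR ω ≤ |a + NR ω| := le_abs_self _
          _ = Real.sqrt ((a + NR ω)^2) := (Real.sqrt_sq_eq_abs _).symm
          _ ≤ Real.sqrt ((a + NR ω)^2 + NI ω^2) := Real.sqrt_le_sqrt (by nlinarith [sq_nonneg (NI ω)])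
      exact Or.inl (Or.inl (by nlinarith))
  -- exponent computations
  have he1 : -(ε*a)^2/(2*(v:ℝ)) = -(ε^2*q) := by
    rw [hvr, hq]; field_simp
  have he2 : -(δ*a)^2/(2*(v:ℝ)) = -(δ^2*q) := by
    rw [hvr, hq]; field_simp
  have he3 : -c^2/(2*(v:ℝ)) = -(ε/2) * q := by
    rw [hvr, hq, hcsq]; field_simp
  -- tail bounds
  have hb1 : μ {ω | ε*a ≤ -NR ω} ≤ ENNReal.ofReal (rexp (-(ε^2*q)) / 2) := by
    have h := my_rv_tail_neg μ NR v hv hNR (ε*a) (by positivity)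
    rwa [he1] at h
  have hb2 : μ {ω | δ*a ≤ NR ω} ≤ ENNReal.ofReal (rexp (-(δ^2*q)) / 2) := by
    have h := my_rv_tail μ NR v hv hNR (δ*a) (by positivity)
    rwa [he2] at h
  have hb3 : μ {ω | c ≤ NI ω} ≤ ENNReal.ofReal (rexp (-(ε/2) * q) / 2) := by
    have h := my_rv_tail μ NI v hv hNI c hc0
    rwa [he3] at h
  have hb4 : μ {ω | c ≤ -NI ω} ≤ ENNReal.ofReal (rexp (-(ε/2) * q) / 2) := by
    have h := my_rv_tail_neg μ NI v hv hNI c hc0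
    rwa [he3] at h
  -- combine
  calc μ {ω | |‖WY ω‖ / a - 1| > ε}
      ≤ μ (({ω | ε*a ≤ -NR ω} ∪ {ω | δ*a ≤ NR ω}) ∪ ({ω | c ≤ NI ω} ∪ {ω | c ≤ -NI ω})) :=
        measure_mono hsub
    _ ≤ (μ {ω | ε*a ≤ -NR ω} + μ {ω | δ*a ≤ NR ω}) + (μ {ω | c ≤ NI ω} + μ {ω | c ≤ -NI ω}) :=
        le_trans (measure_union_le _ _) (add_le_add (measure_union_le _ _) (measure_union_le _ _))
    _ ≤ (ENNReal.ofReal (rexp (-(ε^2*q)) / 2) + ENNReal.ofReal (rexp (-(δ^2*q)) / 2))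
          + (ENNReal.ofReal (rexp (-(ε/2) * q) / 2) + ENNReal.ofReal (rexp (-(ε/2) * q) / 2)) :=
        add_le_add (add_le_add hb1 hb2) (add_le_add hb3 hb4)
    _ = ENNReal.ofReal ((rexp (-(ε^2*q)) / 2 + rexp (-(δ^2*q)) / 2)
          + (rexp (-(ε/2) * q) / 2 + rexp (-(ε/2) * q) / 2)) := by
        rw [← ENNReal.ofReal_add (by positivity) (by positivity),
          ← ENNReal.ofReal_add (by positivity) (by positivity),
          ← ENNReal.ofReal_add (by positivity) (by positivity)]
    _ ≤ ENNReal.ofReal (Real.exp (-(ε^2/16) * q) + Real.exp (-(ε/2) * q)) := by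
        apply ENNReal.ofReal_le_ofReal
        have e1 : rexp (-(ε^2*q)) ≤ rexp (-(ε^2/16) * q) := by
          apply Real.exp_le_exp.mpr
          nlinarith [sq_nonneg ε, hq0]
        have e2 : rexp (-(δ^2*q)) ≤ rexp (-(ε^2/16) * q) := by
          apply Real.exp_le_exp.mpr
          have h6 : ε^2/16 ≤ δ^2 := by nlinarith [hδ4, hε]
          nlinarith [hq0]
        linarith [e1, e2]
end

section
/- For z ∈ [0, 1) and x, y ∈ ℝ, Σ_{k=0}^∞ z^k L_k(x) L_k(y) = (1 − z)^{−1} exp(−z(x+y)/(1−z)) I₀(2√(z x y)/(1−z)), where L_k are the Laguerre polynomials and I₀ is the modified Bessel function of the first kind of order zero (Hardy–Hille formula). -/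
open Real

/-- The modified Bessel function of the first kind of order zero. -/
noncomputable def I0 (x : ℝ) : ℝ := ∑' k : ℕ, (x^2/4)^k / ((Nat.factorial k : ℝ))^2

/-- The Laguerre polynomial `L_k(x) = Σ_{j=0}^k C(k,j) (−x)^j / j!`. -/
noncomputable def laguerre (k : ℕ) (x : ℝ) : ℝ :=
  ∑ j ∈ Finset.range (k + 1), (Nat.choose k j : ℝ) * (-x)^j / (Nat.factorial j : ℝ)

section NatLemmas
open Finset

/-- Trinomial revision, unconditional in `n`. -/
lemma auxT (n a b : ℕ) (hba : b ≤ a) :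
    n.choose a * a.choose b = n.choose b * (n - b).choose (a - b) := by
  rcases le_or_gt a n with h | h
  · exact Nat.choose_mul hba
  · rw [Nat.choose_eq_zero_of_lt h]
    rcases le_or_gt b n with hb | hb
    · rw [Nat.choose_eq_zero_of_lt (show n - b < a - b by omega)]
      simp
    · rw [Nat.choose_eq_zero_of_lt hb]
      simp

/-- Disjoint-choice symmetry. -/
lemma auxD (k s i : ℕ) : k.choose s * (k - s).choose i = k.choose i * (k - i).choose s := by
  have h1 := auxT k (s + i) s (Nat.le_add_right _ _)
  have h2 := auxT k (s + i) i (Nat.le_add_left _ _)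
  rw [Nat.add_sub_cancel_left] at h1
  rw [Nat.add_sub_cancel] at h2
  rw [← h1, ← h2, Nat.choose_symm_add]

/-- `∑_m C(i,m) C(j,m) C(m,t) = C(i,t) C(i-t+j, j-t)` for `t ≤ j`. -/
lemma auxSS (i j t : ℕ) (htj : t ≤ j) :
    ∑ m ∈ range (i + 1), i.choose m * j.choose m * m.choose t
      = i.choose t * (i - t + j).choose (j - t) := by
  rcases le_or_gt t i with hti | hti
  swap
  · rw [Nat.choose_eq_zero_of_lt hti]
    rw [Finset.sum_eq_zero, Nat.zero_mul]
    intro m hm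
    simp only [mem_range] at hm
    rw [Nat.choose_eq_zero_of_lt (show m < t by omega), Nat.mul_zero]
  have step1 : ∑ m ∈ range (i + 1), i.choose m * j.choose m * m.choose t
      = ∑ m ∈ Ico t (i + 1), i.choose m * j.choose m * m.choose t := by
    rw [Finset.range_eq_Ico]
    refine (Finset.sum_subset (Finset.Ico_subset_Ico (Nat.zero_le _) le_rfl) ?_).symm
    intro m hm hm'
    simp only [mem_Ico] at hm hm'
    rw [Nat.choose_eq_zero_of_lt (show m < t by omega), Nat.mul_zero]
  rw [step1, Finset.sum_Ico_eq_sum_range]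
  have step2 : ∀ s, i.choose (t + s) * j.choose (t + s) * (t + s).choose t
      = i.choose t * ((i - t).choose s * j.choose (t + s)) := by
    intro s
    have h := auxT i (t + s) t (Nat.le_add_right _ _)
    rw [Nat.add_sub_cancel_left] at h
    calc i.choose (t + s) * j.choose (t + s) * (t + s).choose t
        = i.choose (t + s) * (t + s).choose t * j.choose (t + s) := by ring
      _ = i.choose t * (i - t).choose s * j.choose (t + s) := by rw [h]
      _ = _ := by ring
  simp only [step2, ← Finset.mul_sum]
  congr 1
  have hv := Nat.add_choose_eq (i - t) j (j - t)
  rw [Finset.Nat.sum_antidiagonal_eq_sum_range_succ_mk] at hv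
  have he : ∀ p ∈ range (j - t + 1), (i - t).choose p * j.choose (j - t - p)
      = (i - t).choose p * j.choose (t + p) := by
    intro p hp
    simp only [mem_range] at hp
    congr 1
    rw [← Nat.choose_symm (show t + p ≤ j by omega)]
    congr 1
    omega
  rw [Finset.sum_congr rfl he] at hv
  rw [hv]
  have e1 : ∑ s ∈ range (i + 1 - t), (i - t).choose s * j.choose (t + s)
      = ∑ s ∈ range (i + j + 2), (i - t).choose s * j.choose (t + s) := by
    apply Finset.sum_subset (Finset.range_subset_range.2 (by omega))
    intro s _ hs
    simp only [mem_range] at hs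
    rw [Nat.choose_eq_zero_of_lt (show i - t < s by omega), Nat.zero_mul]
  have e2 : ∑ s ∈ range (j - t + 1), (i - t).choose s * j.choose (t + s)
      = ∑ s ∈ range (i + j + 2), (i - t).choose s * j.choose (t + s) := by
    apply Finset.sum_subset (Finset.range_subset_range.2 (by omega))
    intro s _ hs
    simp only [mem_range] at hs
    rw [Nat.choose_eq_zero_of_lt (show j < t + s by omega), Nat.mul_zero]
  rw [e1, e2]

/-- The key binomial identity `C(k,i) C(k,j) = ∑_m C(i,m) C(j,m) C(k+m, i+j)`. -/
lemma starId (k i j : ℕ) :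
    k.choose i * k.choose j
      = ∑ m ∈ range (i + 1), i.choose m * j.choose m * (k + m).choose (i + j) := by
  symm
  have hV : ∀ m, (k + m).choose (i + j)
      = ∑ t ∈ range (i + j + 1), k.choose t * m.choose (i + j - t) := by
    intro m
    rw [Nat.add_choose_eq, Finset.Nat.sum_antidiagonal_eq_sum_range_succ_mk]
  calc ∑ m ∈ range (i + 1), i.choose m * j.choose m * (k + m).choose (i + j)
      = ∑ t ∈ range (i + j + 1), k.choose t *
          ∑ m ∈ range (i + 1), i.choose m * j.choose m * m.choose (i + j - t) := by
        simp only [hV, Finset.mul_sum, Finset.sum_mul]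
        rw [Finset.sum_comm]
        apply Finset.sum_congr rfl; intro t _
        apply Finset.sum_congr rfl; intro m _
        ring
    _ = ∑ t ∈ Ico i (i + j + 1), k.choose t *
          ∑ m ∈ range (i + 1), i.choose m * j.choose m * m.choose (i + j - t) := by
        rw [Finset.range_eq_Ico]
        refine (Finset.sum_subset (Finset.Ico_subset_Ico (Nat.zero_le _) le_rfl) ?_).symm
        intro t ht ht'
        simp only [mem_Ico] at ht ht'
        rw [Finset.sum_eq_zero, Nat.mul_zero]
        intro m hm
        simp only [mem_range] at hm
        rcases le_or_gt m j with hmj | hmj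
        · rw [Nat.choose_eq_zero_of_lt (show m < i + j - t by omega), Nat.mul_zero]
        · rw [Nat.choose_eq_zero_of_lt hmj, Nat.mul_zero, Nat.zero_mul]
    _ = ∑ s ∈ range (j + 1), k.choose (i + s) *
          ∑ m ∈ range (i + 1), i.choose m * j.choose m * m.choose (i + j - (i + s)) := by
        rw [Finset.sum_Ico_eq_sum_range]
        have hr : i + j + 1 - i = j + 1 := by omega
        rw [hr]
    _ = ∑ s ∈ range (j + 1), k.choose i * (k - i).choose s * i.choose (j - s) := by
        apply Finset.sum_congr rfl
        intro s hs
        simp only [mem_range] at hs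
        have hsub : i + j - (i + s) = j - s := by omega
        rw [hsub, auxSS i j (j - s) (by omega)]
        have h2 : j - (j - s) = s := by omega
        rw [h2]
        rcases le_or_gt (j - s) i with hle | hlt
        · have h3 : i - (j - s) + j = i + s := by omega
          rw [h3]
          have h4 := auxT k (i + s) s (Nat.le_add_left _ _)
          rw [Nat.add_sub_cancel] at h4
          calc k.choose (i + s) * (i.choose (j - s) * (i + s).choose s)
              = k.choose (i + s) * (i + s).choose s * i.choose (j - s) := by ring
            _ = k.choose s * (k - s).choose i * i.choose (j - s) := by rw [h4]
            _ = k.choose i * (k - i).choose s * i.choose (j - s) := by rw [auxD]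
        · rw [Nat.choose_eq_zero_of_lt hlt]
          ring
    _ = k.choose i * ∑ s ∈ range (j + 1), (k - i).choose s * i.choose (j - s) := by
        rw [Finset.mul_sum]
        apply Finset.sum_congr rfl
        intro s _
        ring
    _ = k.choose i * k.choose j := by
        rcases le_or_gt i k with hik | hik
        · congr 1
          have hv := Nat.add_choose_eq (k - i) i j
          rw [Finset.Nat.sum_antidiagonal_eq_sum_range_succ_mk] at hv
          rw [← hv]
          congr 1
          omega
        · rw [Nat.choose_eq_zero_of_lt hik, Nat.zero_mul, Nat.zero_mul]

end NatLemmas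

section Analytic
open Finset

variable {z x y : ℝ}

/-- Shifted geometric-choose series. -/
lemma hasSum_shift (hz0 : 0 ≤ z) (hz1 : z < 1) (i j m : ℕ) (hm : m ≤ i + j) :
    HasSum (fun k : ℕ => (((k + m).choose (i + j) : ℝ)) * z ^ k)
      (z ^ (i + j - m) / (1 - z) ^ (i + j + 1)) := by
  have hz : ‖z‖ < 1 := by rw [Real.norm_eq_abs, abs_of_nonneg hz0]; exact hz1
  have h0 := hasSum_choose_mul_geometric_of_norm_lt_one (𝕜 := ℝ) (i + j) hz
  have h1 := h0.mul_left (z ^ (i + j - m))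
  have h2 : (fun n => z ^ (i + j - m) * (((n + (i + j)).choose (i + j) : ℝ) * z ^ n))
      = fun n => (((n + (i + j - m) + m).choose (i + j) : ℝ)) * z ^ (n + (i + j - m)) := by
    funext n
    have : n + (i + j - m) + m = n + (i + j) := by omega
    rw [this, pow_add]
    ring
  rw [h2] at h1
  have h3 := (hasSum_nat_add_iff
      (f := fun k => (((k + m).choose (i + j) : ℝ)) * z ^ k) (i + j - m)).mp h1
  have h4 : ∑ k ∈ range (i + j - m), (((k + m).choose (i + j) : ℝ)) * z ^ k = 0 := by
    apply Finset.sum_eq_zero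
    intro k hk
    simp only [mem_range] at hk
    rw [Nat.choose_eq_zero_of_lt (show k + m < i + j by omega)]
    simp
  rw [h4, add_zero] at h3
  rw [show z ^ (i + j - m) / (1 - z) ^ (i + j + 1) = z ^ (i + j - m) * (1 / (1 - z) ^ (i + j + 1)) by ring]
  exact h3

/-- The `k`-sum of `C(k,i) C(k,j) z^k`. -/
lemma hasSum_kchoose (hz0 : 0 ≤ z) (hz1 : z < 1) (i j : ℕ) :
    HasSum (fun k : ℕ => ((k.choose i : ℝ) * (k.choose j)) * z ^ k)
      (∑ m ∈ range (i + 1),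
        ((i.choose m : ℝ) * (j.choose m)) * (z ^ (i + j - m) / (1 - z) ^ (i + j + 1))) := by
  have H : ∀ m ∈ range (i + 1),
      HasSum (fun k : ℕ => ((i.choose m : ℝ) * (j.choose m)) * (((k + m).choose (i + j) : ℝ) * z ^ k))
        (((i.choose m : ℝ) * (j.choose m)) * (z ^ (i + j - m) / (1 - z) ^ (i + j + 1))) := by
    intro m hm
    simp only [mem_range] at hm
    exact (hasSum_shift hz0 hz1 i j m (by omega)).mul_left _
  have h := hasSum_sum H
  convert h using 2 with k
  have hs := starId k i j
  have : ((k.choose i * k.choose j : ℕ) : ℝ)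
      = ((∑ m ∈ range (i + 1), i.choose m * j.choose m * (k + m).choose (i + j) : ℕ) : ℝ) := by
    rw [hs]
  push_cast at this
  rw [this, Finset.sum_mul]
  apply Finset.sum_congr rfl
  intro m _
  ring

end Analytic


section Defs
open Finset

variable {z x y : ℝ}

noncomputable def vv (z : ℝ) (i j : ℕ) : ℝ :=
  ∑ m ∈ range (i + 1),
    ((i.choose m : ℝ) * (j.choose m)) * (z ^ (i + j - m) / (1 - z) ^ (i + j + 1))

noncomputable def gFun (z x y : ℝ) (p : (ℕ × ℕ) × ℕ) : ℝ :=
  z ^ p.2 * ((p.2.choose p.1.1 : ℝ) * (p.2.choose p.1.2)) *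
    ((-x) ^ p.1.1 * (-y) ^ p.1.2) / ((p.1.1.factorial : ℝ) * (p.1.2.factorial : ℝ))

noncomputable def phiFun (z x y : ℝ) (q : (ℕ × ℕ) × ℕ) : ℝ :=
  ((-x) ^ q.1.1 * (-y) ^ q.1.2 / ((q.1.1.factorial : ℝ) * (q.1.2.factorial : ℝ))) *
    (((q.1.1.choose q.2 : ℝ) * (q.1.2.choose q.2)) *
      (z ^ (q.1.1 + q.1.2 - q.2) / (1 - z) ^ (q.1.1 + q.1.2 + 1)))



def psi (q : (ℕ × ℕ) × ℕ) : (ℕ × ℕ) × ℕ := ((q.1.1 + q.2, q.1.2 + q.2), q.2)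

noncomputable def rTerm (z x y : ℝ) (q : (ℕ × ℕ) × ℕ) : ℝ :=
  (1 - z)⁻¹ * ((-(z * x / (1 - z))) ^ q.1.1 / (q.1.1.factorial : ℝ)
      * ((-(z * y / (1 - z))) ^ q.1.2 / (q.1.2.factorial : ℝ))
    * ((z * x * y / (1 - z) ^ 2) ^ q.2 / ((q.2.factorial : ℝ)) ^ 2))


lemma hasSum_g (hz0 : 0 ≤ z) (hz1 : z < 1) (i j : ℕ) :
    HasSum (fun k => gFun z x y ((i, j), k))
      ((-x) ^ i * (-y) ^ j / ((i.factorial : ℝ) * (j.factorial : ℝ)) * vv z i j) := by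
  have h := (hasSum_kchoose hz0 hz1 i j).mul_left
    ((-x) ^ i * (-y) ^ j / ((i.factorial : ℝ) * (j.factorial : ℝ)))
  rw [show (fun k : ℕ => (-x) ^ i * (-y) ^ j / ((i.factorial : ℝ) * (j.factorial : ℝ)) *
      (((k.choose i : ℝ) * (k.choose j)) * z ^ k)) = fun k => gFun z x y ((i, j), k) by
    funext k; unfold gFun; ring] at h
  unfold vv
  exact h

lemma abs_g (hz0 : 0 ≤ z) (hx : 0 ≤ x) (hy : 0 ≤ y) (p : (ℕ × ℕ) × ℕ) :
    |gFun z x y p| = gFun z (-x) (-y) p := by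
  unfold gFun
  rw [abs_div, abs_mul, abs_mul, abs_mul, abs_mul, abs_mul, abs_pow, abs_pow, abs_pow, neg_neg, neg_neg,
    abs_neg, abs_neg, abs_of_nonneg hx, abs_of_nonneg hy, abs_of_nonneg hz0,
    Nat.abs_cast, Nat.abs_cast, Nat.abs_cast, Nat.abs_cast]

lemma g_nonneg (hz0 : 0 ≤ z) (hx : 0 ≤ x) (hy : 0 ≤ y) (p : (ℕ × ℕ) × ℕ) :
    0 ≤ gFun z (-x) (-y) p := by
  unfold gFun
  rw [neg_neg, neg_neg]
  positivity

lemma vv_nonneg (hz0 : 0 ≤ z) (hz1 : z < 1) (i j : ℕ) : 0 ≤ vv z i j := by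
  apply Finset.sum_nonneg
  intro m _
  have : (0:ℝ) < 1 - z := by linarith
  positivity

lemma choose_le_two_pow (j m : ℕ) : j.choose m ≤ 2 ^ j := by
  rcases le_or_gt m j with h | h
  · calc j.choose m ≤ ∑ t ∈ range (j + 1), j.choose t :=
        Finset.single_le_sum (f := fun t => j.choose t) (fun _ _ => Nat.zero_le _)
          (Finset.mem_range.2 (by omega))
    _ = 2 ^ j := Nat.sum_range_choose j
  · rw [Nat.choose_eq_zero_of_lt h]; exact Nat.zero_le _

lemma vbound (hz0 : 0 ≤ z) (hz1 : z < 1) (hx : 0 ≤ x) (hy : 0 ≤ y) (i j : ℕ) :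
    x ^ i * y ^ j / ((i.factorial : ℝ) * (j.factorial : ℝ)) * vv z i j
      ≤ (1 - z)⁻¹ * ((2 * x / (1 - z)) ^ i / (i.factorial : ℝ))
          * ((2 * y / (1 - z)) ^ j / (j.factorial : ℝ)) := by
  have hc : (0:ℝ) < 1 - z := by linarith
  have h1 : vv z i j ≤ (2:ℝ) ^ i * 2 ^ j / (1 - z) ^ (i + j + 1) := by
    have hterm : ∀ m ∈ range (i + 1),
        ((i.choose m : ℝ) * (j.choose m)) * (z ^ (i + j - m) / (1 - z) ^ (i + j + 1))
          ≤ ((i.choose m : ℝ) * (j.choose m)) * (1 / (1 - z) ^ (i + j + 1)) := by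
      intro m _
      apply mul_le_mul_of_nonneg_left _ (by positivity)
      apply div_le_div_of_nonneg_right _ (by positivity)
      exact pow_le_one₀ hz0 hz1.le
    calc vv z i j ≤ ∑ m ∈ range (i + 1),
          ((i.choose m : ℝ) * (j.choose m)) * (1 / (1 - z) ^ (i + j + 1)) :=
        Finset.sum_le_sum hterm
      _ = (∑ m ∈ range (i + 1), ((i.choose m : ℝ) * (j.choose m))) / (1 - z) ^ (i + j + 1) := by
        rw [Finset.sum_div]
        apply Finset.sum_congr rfl
        intro m _
        ring
      _ ≤ (2:ℝ) ^ i * 2 ^ j / (1 - z) ^ (i + j + 1) := by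
        apply div_le_div_of_nonneg_right _ (by positivity) |>.trans_eq rfl
        have : ∑ m ∈ range (i + 1), ((i.choose m : ℝ) * (j.choose m))
            ≤ ∑ m ∈ range (i + 1), ((i.choose m : ℝ) * (2:ℝ) ^ j) := by
          apply Finset.sum_le_sum
          intro m _
          apply mul_le_mul_of_nonneg_left _ (by positivity)
          exact_mod_cast Nat.cast_le.2 (choose_le_two_pow j m)
        refine this.trans ?_
        rw [← Finset.sum_mul]
        have : ∑ m ∈ range (i + 1), (i.choose m : ℝ) = (2:ℝ) ^ i := by
          rw [← Nat.cast_sum, Nat.sum_range_choose]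
          push_cast
          ring
        rw [this]
  calc x ^ i * y ^ j / ((i.factorial : ℝ) * (j.factorial : ℝ)) * vv z i j
      ≤ x ^ i * y ^ j / ((i.factorial : ℝ) * (j.factorial : ℝ))
          * ((2:ℝ) ^ i * 2 ^ j / (1 - z) ^ (i + j + 1)) := by
        apply mul_le_mul_of_nonneg_left h1 (by positivity)
    _ = (1 - z)⁻¹ * ((2 * x / (1 - z)) ^ i / (i.factorial : ℝ))
          * ((2 * y / (1 - z)) ^ j / (j.factorial : ℝ)) := by
        rw [div_pow, div_pow, mul_pow, mul_pow, pow_add, pow_add, pow_one]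
        have hi : (i.factorial : ℝ) ≠ 0 := Nat.cast_ne_zero.2 i.factorial_ne_zero
        have hj : (j.factorial : ℝ) ≠ 0 := Nat.cast_ne_zero.2 j.factorial_ne_zero
        field_simp

lemma summable_W (hz0 : 0 ≤ z) (hz1 : z < 1) :
    Summable (fun ij : ℕ × ℕ => (1 - z)⁻¹ * ((2 * x / (1 - z)) ^ ij.1 / (ij.1.factorial : ℝ))
      * ((2 * y / (1 - z)) ^ ij.2 / (ij.2.factorial : ℝ))) := by
  have h1 : Summable (fun i : ℕ => ‖(2 * x / (1 - z)) ^ i / (i.factorial : ℝ)‖) :=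
    summable_norm_iff.2 (Real.summable_pow_div_factorial _)
  have h2 : Summable (fun j : ℕ => ‖(2 * y / (1 - z)) ^ j / (j.factorial : ℝ)‖) :=
    summable_norm_iff.2 (Real.summable_pow_div_factorial _)
  have h := (summable_mul_of_summable_norm h1 h2).mul_left (1 - z)⁻¹
  convert h using 2 with ij
  · rfl
  ring


lemma summable_g (hz0 : 0 ≤ z) (hz1 : z < 1) (hx : 0 ≤ x) (hy : 0 ≤ y) :
    Summable (gFun z x y) := by
  rw [← summable_abs_iff]
  have habs : (fun p => |gFun z x y p|) = gFun z (-x) (-y) := by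
    funext p; exact abs_g hz0 hx hy p
  rw [habs]
  apply (summable_prod_of_nonneg (g_nonneg hz0 hx hy)).2
  constructor
  · intro ij
    exact (hasSum_g hz0 hz1 ij.1 ij.2).summable
  · have hval : (fun ij : ℕ × ℕ => ∑' k : ℕ, gFun z (-x) (-y) (ij, k))
        = fun ij : ℕ × ℕ => x ^ ij.1 * y ^ ij.2
            / ((ij.1.factorial : ℝ) * (ij.2.factorial : ℝ)) * vv z ij.1 ij.2 := by
      funext ij
      rw [(hasSum_g hz0 hz1 ij.1 ij.2).tsum_eq]
      rw [neg_neg, neg_neg]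
    rw [show (fun ij : ℕ × ℕ => ∑' k : ℕ, gFun z (-x) (-y) (ij, k))
        = fun ij : ℕ × ℕ => ∑' k : ℕ, gFun z (-x) (-y) (ij, k) from rfl]
    refine Summable.of_nonneg_of_le (fun ij => tsum_nonneg (fun k => g_nonneg hz0 hx hy _)) ?_
      (summable_W (x := x) (y := y) hz0 hz1)
    intro ij
    have := congrFun hval ij
    rw [this]
    exact vbound hz0 hz1 hx hy ij.1 ij.2



lemma lhs_term (k : ℕ) :
    z ^ k * laguerre k x * laguerre k y = ∑' ij : ℕ × ℕ, gFun z x y (ij, k) := by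
  rw [tsum_eq_sum (s := range (k + 1) ×ˢ Finset.range (k + 1))
    (f := fun ij : ℕ × ℕ => gFun z x y (ij, k)) ?_]
  · rw [Finset.sum_product]
    unfold laguerre gFun
    simp only [Finset.mul_sum, Finset.sum_mul]
    rw [Finset.sum_comm]
    apply Finset.sum_congr rfl
    intro i _
    apply Finset.sum_congr rfl
    intro j _
    ring
  · intro ij hij
    simp only [Finset.mem_product, mem_range, not_and_or, not_lt] at hij
    rcases hij with h | h
    · simp [gFun, Nat.choose_eq_zero_of_lt (show k < ij.1 by omega)]
    · simp [gFun, Nat.choose_eq_zero_of_lt (show k < ij.2 by omega)]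

lemma phi_row (i j : ℕ) :
    (-x) ^ i * (-y) ^ j / ((i.factorial : ℝ) * (j.factorial : ℝ)) * vv z i j
      = ∑' m : ℕ, phiFun z x y ((i, j), m) := by
  rw [tsum_eq_sum (s := range (i + 1)) (f := fun m : ℕ => phiFun z x y ((i, j), m)) ?_]
  · unfold vv phiFun
    rw [Finset.mul_sum]
  · intro m hm
    simp only [mem_range, not_lt] at hm
    simp [phiFun, Nat.choose_eq_zero_of_lt (show i < m by omega)]

lemma abs_phi (hz0 : 0 ≤ z) (hz1 : z < 1) (hx : 0 ≤ x) (hy : 0 ≤ y) (q : (ℕ × ℕ) × ℕ) :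
    |phiFun z x y q| = phiFun z (-x) (-y) q := by
  have hc : (0:ℝ) < 1 - z := by linarith
  unfold phiFun
  rw [abs_mul, abs_div, abs_mul, abs_mul, abs_mul, abs_mul, abs_div, abs_pow, abs_pow,
    abs_neg, abs_neg, abs_of_nonneg hx, abs_of_nonneg hy, neg_neg, neg_neg,
    Nat.abs_cast, Nat.abs_cast, Nat.abs_cast, Nat.abs_cast,
    abs_of_nonneg (pow_nonneg hz0 _), abs_of_nonneg (pow_nonneg hc.le _)]

lemma phi_nonneg (hz0 : 0 ≤ z) (hz1 : z < 1) (hx : 0 ≤ x) (hy : 0 ≤ y) (q : (ℕ × ℕ) × ℕ) :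
    0 ≤ phiFun z (-x) (-y) q := by
  have hc : (0:ℝ) < 1 - z := by linarith
  unfold phiFun
  rw [neg_neg, neg_neg]
  positivity

lemma summable_phi (hz0 : 0 ≤ z) (hz1 : z < 1) (hx : 0 ≤ x) (hy : 0 ≤ y) :
    Summable (phiFun z x y) := by
  rw [← summable_abs_iff]
  have habs : (fun q => |phiFun z x y q|) = phiFun z (-x) (-y) := by
    funext q; exact abs_phi hz0 hz1 hx hy q
  rw [habs]
  apply (summable_prod_of_nonneg (phi_nonneg hz0 hz1 hx hy)).2
  constructor
  · intro ij
    apply summable_of_ne_finset_zero (s := range (ij.1 + 1))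
    intro m hm
    simp only [mem_range, not_lt] at hm
    simp [phiFun, Nat.choose_eq_zero_of_lt (show ij.1 < m by omega)]
  · have hval : (fun ij : ℕ × ℕ => ∑' m : ℕ, phiFun z (-x) (-y) (ij, m))
        = fun ij : ℕ × ℕ => x ^ ij.1 * y ^ ij.2
            / ((ij.1.factorial : ℝ) * (ij.2.factorial : ℝ)) * vv z ij.1 ij.2 := by
      funext ij
      rw [← phi_row ij.1 ij.2, neg_neg, neg_neg]
    refine Summable.of_nonneg_of_le
      (fun ij => tsum_nonneg (fun m => phi_nonneg hz0 hz1 hx hy _)) ?_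
      (summable_W (x := x) (y := y) hz0 hz1)
    intro ij
    have := congrFun hval ij
    rw [this]
    exact vbound hz0 hz1 hx hy ij.1 ij.2


lemma psi_inj : Function.Injective psi := by
  intro a b h
  unfold psi at h
  obtain ⟨⟨a1, a2⟩, a3⟩ := a
  obtain ⟨⟨b1, b2⟩, b3⟩ := b
  simp only [Prod.mk.injEq] at h
  obtain ⟨⟨h1, h2⟩, h3⟩ := h
  subst h3
  simp only [Nat.add_right_cancel_iff] at h1 h2
  subst h1; subst h2; rfl

lemma psi_support (q : (ℕ × ℕ) × ℕ) (hq : q ∉ Set.range psi) : phiFun z x y q = 0 := by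
  obtain ⟨⟨i, j⟩, m⟩ := q
  unfold phiFun
  simp only
  rcases le_or_gt m i with hmi | hmi
  · rcases le_or_gt m j with hmj | hmj
    · exfalso
      refine hq ⟨((i - m, j - m), m), ?_⟩
      simp only [psi, Prod.mk.injEq]
      refine ⟨⟨?_, ?_⟩, trivial⟩ <;> omega
    · rw [Nat.choose_eq_zero_of_lt hmj]
      simp
  · rw [Nat.choose_eq_zero_of_lt hmi]
    simp


lemma phi_psi (hz1 : z < 1) (q : (ℕ × ℕ) × ℕ) :
    phiFun z x y (psi q) = rTerm z x y q := by
  obtain ⟨⟨a, b⟩, m⟩ := q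
  have hc : (1 : ℝ) - z ≠ 0 := by intro h; nlinarith [h]
  unfold phiFun psi rTerm
  simp only
  have hca : ((a + m).choose m : ℝ) = ((a + m).factorial : ℝ)
      / ((a.factorial : ℝ) * (m.factorial : ℝ)) := by
    rw [eq_div_iff (by positivity)]
    have h' := Nat.add_choose_mul_factorial_mul_factorial a m
    have h'' : (((a + m).choose m * a.factorial * m.factorial : ℕ) : ℝ)
        = (((a + m).factorial : ℕ) : ℝ) := by exact_mod_cast congrArg (Nat.cast (R := ℝ)) h'
    push_cast at h''
    linarith
  have hcb : ((b + m).choose m : ℝ) = ((b + m).factorial : ℝ)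
      / ((b.factorial : ℝ) * (m.factorial : ℝ)) := by
    rw [eq_div_iff (by positivity)]
    have h' := Nat.add_choose_mul_factorial_mul_factorial b m
    have h'' : (((b + m).choose m * b.factorial * m.factorial : ℕ) : ℝ)
        = (((b + m).factorial : ℕ) : ℝ) := by exact_mod_cast congrArg (Nat.cast (R := ℝ)) h'
    push_cast at h''
    linarith
  have e1 : a + m + (b + m) - m = a + b + m := by omega
  have e2 : a + m + (b + m) + 1 = a + b + m + m + 1 := by omega
  rw [hca, hcb, e1, e2]
  have e3 : (z * x * y / (1 - z) ^ 2) ^ m = (z * x * y) ^ m / ((1 - z) ^ m * (1 - z) ^ m) := by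
    rw [pow_two, div_pow, mul_pow ((1:ℝ)-z) ((1:ℝ)-z) m]
  have h5 : (-x) ^ m * (-y) ^ m = (x * y) ^ m := by rw [← mul_pow, neg_mul_neg]
  have e4 : (-x) ^ (a + m) * (-y) ^ (b + m) = (-x) ^ a * (-y) ^ b * (x * y) ^ m := by
    calc (-x) ^ (a + m) * (-y) ^ (b + m)
        = (-x) ^ a * (-y) ^ b * ((-x) ^ m * (-y) ^ m) := by rw [pow_add, pow_add]; ring
      _ = (-x) ^ a * (-y) ^ b * (x * y) ^ m := by rw [h5]
  rw [e3, e4]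
  have hfa : (a.factorial : ℝ) ≠ 0 := Nat.cast_ne_zero.2 a.factorial_ne_zero
  have hfb : (b.factorial : ℝ) ≠ 0 := Nat.cast_ne_zero.2 b.factorial_ne_zero
  have hfm : (m.factorial : ℝ) ≠ 0 := Nat.cast_ne_zero.2 m.factorial_ne_zero
  have hfam : ((a + m).factorial : ℝ) ≠ 0 := Nat.cast_ne_zero.2 (a + m).factorial_ne_zero
  have hfbm : ((b + m).factorial : ℝ) ≠ 0 := Nat.cast_ne_zero.2 (b + m).factorial_ne_zero
  field_simp
  rw [← neg_div, ← neg_div, div_pow, div_pow]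
  field_simp
  ring

lemma rhs_eq (hz0 : 0 ≤ z) (hz1 : z < 1) (hx : 0 ≤ x) (hy : 0 ≤ y) :
    (1 - z)⁻¹ * Real.exp (-(z * (x + y)) / (1 - z))
        * I0 (2 * Real.sqrt (z * x * y) / (1 - z))
      = ∑' q : (ℕ × ℕ) × ℕ, rTerm z x y q := by
  have hc : (0:ℝ) < 1 - z := by linarith
  have hexp : Real.exp (-(z * (x + y)) / (1 - z))
      = Real.exp (-(z * x / (1 - z))) * Real.exp (-(z * y / (1 - z))) := by
    rw [← Real.exp_add]
    congr 1
    field_simp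
    ring
  have hexpx : Real.exp (-(z * x / (1 - z)))
      = ∑' a : ℕ, (-(z * x / (1 - z))) ^ a / (a.factorial : ℝ) := by
    rw [Real.exp_eq_exp_ℝ, NormedSpace.exp_eq_tsum_div]
  have hexpy : Real.exp (-(z * y / (1 - z)))
      = ∑' b : ℕ, (-(z * y / (1 - z))) ^ b / (b.factorial : ℝ) := by
    rw [Real.exp_eq_exp_ℝ, NormedSpace.exp_eq_tsum_div]
  have hI : I0 (2 * Real.sqrt (z * x * y) / (1 - z))
      = ∑' m : ℕ, (z * x * y / (1 - z) ^ 2) ^ m / ((m.factorial : ℝ)) ^ 2 := by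
    have harg : (2 * Real.sqrt (z * x * y) / (1 - z)) ^ 2 / 4 = z * x * y / (1 - z) ^ 2 := by
      rw [div_pow, mul_pow, Real.sq_sqrt (by positivity)]
      ring
    rw [I0, harg]
  have hux : Summable (fun a : ℕ => ‖(-(z * x / (1 - z))) ^ a / (a.factorial : ℝ)‖) := by
    refine (Real.summable_pow_div_factorial |(-(z * x / (1 - z)))|).congr fun a => ?_
    rw [Real.norm_eq_abs, abs_div, abs_pow, Nat.abs_cast]
  have huy : Summable (fun b : ℕ => ‖(-(z * y / (1 - z))) ^ b / (b.factorial : ℝ)‖) := by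
    refine (Real.summable_pow_div_factorial |(-(z * y / (1 - z)))|).congr fun b => ?_
    rw [Real.norm_eq_abs, abs_div, abs_pow, Nat.abs_cast]
  have ht : Summable (fun m : ℕ => ‖(z * x * y / (1 - z) ^ 2) ^ m / ((m.factorial : ℝ)) ^ 2‖) := by
    refine Summable.of_nonneg_of_le (fun m => norm_nonneg _) (fun m => ?_)
      (Real.summable_pow_div_factorial (z * x * y / (1 - z) ^ 2))
    have hq : (0:ℝ) ≤ z * x * y / (1 - z) ^ 2 := by positivity
    rw [Real.norm_eq_abs, abs_of_nonneg (by positivity)]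
    apply div_le_div_of_nonneg_left (by positivity) (by positivity)
    calc ((m.factorial : ℝ)) ≤ (m.factorial : ℝ) * (m.factorial : ℝ) := by
          have h1 : (1:ℝ) ≤ (m.factorial : ℝ) := by exact_mod_cast m.factorial_pos
          nlinarith [h1]
      _ = ((m.factorial : ℝ)) ^ 2 := by ring
  rw [mul_assoc, hexp, hexpx, hexpy, hI]
  rw [tsum_mul_tsum_of_summable_norm hux huy]
  rw [tsum_mul_tsum_of_summable_norm (hux.mul_norm huy) ht]
  rw [← tsum_mul_left]
  rfl

end Defs

/-- Hardy–Hille formula. -/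
theorem stmt10 (z x y : ℝ) (hz0 : 0 ≤ z) (hz1 : z < 1) (hx : 0 ≤ x) (hy : 0 ≤ y) :
    ∑' k : ℕ, z^k * laguerre k x * laguerre k y
      = (1 - z)⁻¹ * Real.exp (-(z * (x + y)) / (1 - z))
          * I0 (2 * Real.sqrt (z * x * y) / (1 - z)) := by
  have hrow : ∀ ij : ℕ × ℕ, Summable (fun k => gFun z x y (ij, k)) :=
    fun ij => (hasSum_g hz0 hz1 ij.1 ij.2).summable
  have hcol : ∀ k : ℕ, Summable (fun ij : ℕ × ℕ => gFun z x y (ij, k)) := by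
    intro k
    apply summable_of_ne_finset_zero (s := Finset.range (k + 1) ×ˢ Finset.range (k + 1))
    intro ij hij
    simp only [Finset.mem_product, Finset.mem_range, not_and_or, not_lt] at hij
    rcases hij with h | h
    · simp [gFun, Nat.choose_eq_zero_of_lt (show k < ij.1 by omega)]
    · simp [gFun, Nat.choose_eq_zero_of_lt (show k < ij.2 by omega)]
  have hphirow : ∀ ij : ℕ × ℕ, Summable (fun m => phiFun z x y (ij, m)) := by
    intro ij
    apply summable_of_ne_finset_zero (s := Finset.range (ij.1 + 1))
    intro m hm
    simp only [Finset.mem_range, not_lt] at hm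
    simp [phiFun, Nat.choose_eq_zero_of_lt (show ij.1 < m by omega)]
  calc ∑' k : ℕ, z ^ k * laguerre k x * laguerre k y
      = ∑' k : ℕ, ∑' ij : ℕ × ℕ, gFun z x y (ij, k) := tsum_congr (fun k => lhs_term k)
    _ = ∑' ij : ℕ × ℕ, ∑' k : ℕ, gFun z x y (ij, k) :=
        Summable.tsum_comm' (f := fun ij k => gFun z x y (ij, k)) (summable_g hz0 hz1 hx hy) hrow hcol
    _ = ∑' ij : ℕ × ℕ, ((-x) ^ ij.1 * (-y) ^ ij.2
          / ((ij.1.factorial : ℝ) * (ij.2.factorial : ℝ)) * vv z ij.1 ij.2) :=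
        tsum_congr (fun ij => (hasSum_g hz0 hz1 ij.1 ij.2).tsum_eq)
    _ = ∑' ij : ℕ × ℕ, ∑' m : ℕ, phiFun z x y (ij, m) :=
        tsum_congr (fun ij => phi_row ij.1 ij.2)
    _ = ∑' q : (ℕ × ℕ) × ℕ, phiFun z x y q :=
        ((summable_phi hz0 hz1 hx hy).tsum_prod' hphirow).symm
    _ = ∑' q : (ℕ × ℕ) × ℕ, phiFun z x y (psi q) := by
        refine (psi_inj.tsum_eq ?_).symm
        rw [Function.support_subset_iff']
        exact fun q hq => psi_support q hq
    _ = ∑' q : (ℕ × ℕ) × ℕ, rTerm z x y q := tsum_congr (fun q => phi_psi hz1 q)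
    _ = _ := (rhs_eq hz0 hz1 hx hy).symm
end

section
/- For any a ≥ 0 and b > a, ∫₀^∞ r² I₀(a r) K₀(b r) dr = (π/2) b^{−3} · ₂F₁(3/2, 3/2; 1; a²/b²), where ₂F₁ is the Gauss hypergeometric function, I₀ the modified Bessel function of the first kind, and K₀ the modified Bessel function of the second kind of order zero. -/
open Real MeasureTheory

/-- The modified Bessel function of the second kind of order zero. -/
noncomputable def K0 (x : ℝ) : ℝ := ∫ t in Set.Ioi (0:ℝ), Real.exp (-(x * Real.cosh t))

/-- The Gauss hypergeometric function `₂F₁(a, b; c; x)`. -/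
noncomputable def twoF1 (a b c x : ℝ) : ℝ :=
  (Real.Gamma c / (Real.Gamma a * Real.Gamma b)) *
    ∑' k : ℕ, Real.Gamma (k + a) * Real.Gamma (k + b) / Real.Gamma (k + c)
      * x^k / (Nat.factorial k : ℝ)

namespace Stmt14Aux

/-! ### Wallis integrals -/

lemma wallis (m : ℕ) : ∫ x in (0:ℝ)..(π/2), Real.cos x ^ (2*m)
    = π / 2 * ((2*m).factorial : ℝ) / (4^m * (m.factorial : ℝ)^2) := by
  induction m with
  | zero => simp
  | succ k ih =>
    have h := integral_cos_pow (a := (0:ℝ)) (b := π/2) (2*k)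
    rw [show 2*(k+1) = 2*k+2 by ring, h, ih, Real.cos_pi_div_two, Real.sin_zero]
    have h1 : ((2*k : ℕ):ℝ) = 2*(k:ℝ) := by push_cast; ring
    rw [h1]
    have h2 : (((2*k+2).factorial) : ℝ) = (2*(k:ℝ)+2)*(2*(k:ℝ)+1)*(((2*k).factorial) : ℝ) := by
      rw [show 2*k+2 = (2*k+1)+1 by ring, Nat.factorial_succ, Nat.factorial_succ]
      push_cast; ring
    have h3 : (((k+1)).factorial : ℝ) = ((k:ℝ)+1)*((k).factorial : ℝ) := by
      rw [Nat.factorial_succ]; push_cast; ring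
    rw [h2, h3, zero_pow (by omega), Real.sin_pi_div_two]
    have hk : ((k).factorial : ℝ) ≠ 0 := Nat.cast_ne_zero.mpr (Nat.factorial_ne_zero k)
    have h4 : (2*(k:ℝ)+2) ≠ 0 := by positivity
    have h5 : (4:ℝ)^k ≠ 0 := by positivity
    field_simp
    ring

/-! ### The integral of odd powers of `sech` via the Gudermannian substitution -/

lemma gd_deriv : ∀ x ∈ Set.Ioi (0:ℝ), HasDerivWithinAt (fun t => arctan (Real.sinh t))
    ((Real.cosh x)⁻¹) (Set.Ioi 0) x := by
  intro x _
  have h := (Real.hasDerivAt_arctan (Real.sinh x)).comp x (Real.hasDerivAt_sinh x)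
  have hc : Real.cosh x ≠ 0 := (Real.cosh_pos x).ne'
  have : (1 / (1 + Real.sinh x ^ 2)) * Real.cosh x = (Real.cosh x)⁻¹ := by
    rw [show (1 : ℝ) + Real.sinh x ^ 2 = Real.cosh x ^ 2 by rw [Real.cosh_sq]; ring]
    field_simp
  rw [← this]
  exact h.hasDerivWithinAt

lemma gd_inj : Set.InjOn (fun t => arctan (Real.sinh t)) (Set.Ioi 0) :=
  ((Real.arctan_strictMono.comp Real.sinh_strictMono).injective).injOn

lemma gd_image : (fun t => arctan (Real.sinh t)) '' (Set.Ioi 0) = Set.Ioo 0 (π/2) := by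
  ext y
  constructor
  · rintro ⟨t, ht, rfl⟩
    refine ⟨?_, Real.arctan_lt_pi_div_two _⟩
    have := Real.arctan_strictMono (Real.sinh_pos_iff.mpr ht)
    simpa using this
  · rintro ⟨hy0, hy2⟩
    refine ⟨Real.arsinh (Real.tan y), ?_, ?_⟩
    · have : (0:ℝ) < Real.tan y := Real.tan_pos_of_pos_of_lt_pi_div_two hy0 hy2
      simpa using (Real.arsinh_pos_iff.mpr this)
    · simp only [Real.sinh_arsinh]
      exact Real.arctan_tan (by linarith [Real.pi_pos]) hy2

lemma cos_gd (t : ℝ) : Real.cos (arctan (Real.sinh t)) = (Real.cosh t)⁻¹ := by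
  rw [Real.cos_arctan, show (1 : ℝ) + Real.sinh t ^ 2 = Real.cosh t ^ 2 by rw [Real.cosh_sq]; ring,
    Real.sqrt_sq (Real.cosh_pos t).le, one_div]

lemma sech_integral (m : ℕ) : ∫ t in Set.Ioi (0:ℝ), ((Real.cosh t)⁻¹)^(2*m+1)
    = ∫ x in Set.Ioo (0:ℝ) (π/2), Real.cos x ^ (2*m) := by
  rw [← gd_image, integral_image_eq_integral_abs_deriv_smul measurableSet_Ioi gd_deriv gd_inj]
  refine setIntegral_congr_fun measurableSet_Ioi (fun t _ => ?_)
  rw [cos_gd, smul_eq_mul, abs_of_pos (by positivity), ← pow_succ']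

lemma sech_integrable (m : ℕ) :
    IntegrableOn (fun t => ((Real.cosh t)⁻¹)^(2*m+1)) (Set.Ioi (0:ℝ)) := by
  have h := (integrableOn_image_iff_integrableOn_abs_deriv_smul measurableSet_Ioi gd_deriv gd_inj
    (fun x => Real.cos x ^ (2*m))).mp ?_
  · refine h.congr_fun (fun t _ => ?_) measurableSet_Ioi
    dsimp only
    rw [cos_gd, smul_eq_mul, abs_of_pos (by positivity), ← pow_succ']
  · rw [gd_image]
    exact ((continuous_cos.pow _).integrableOn_Icc).mono_set Set.Ioo_subset_Icc_self

lemma sech_closed (m : ℕ) : ∫ t in Set.Ioi (0:ℝ), ((Real.cosh t)⁻¹)^(2*m+1)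
    = π / 2 * (((2*m).factorial) : ℝ) / (4^m * ((m).factorial : ℝ)^2) := by
  rw [sech_integral m, ← MeasureTheory.integral_Ioc_eq_integral_Ioo,
    ← intervalIntegral.integral_of_le (by positivity : (0:ℝ) ≤ π/2), wallis]

/-! ### The Gamma-type integral -/

lemma gamma_int {c : ℝ} (hc : 0 < c) (n : ℕ) :
    ∫ r in Set.Ioi (0:ℝ), r^n * Real.exp (-(c*r)) = (n.factorial : ℝ) / c^(n+1) := by
  have h := Real.integral_rpow_mul_exp_neg_mul_Ioi (a := (n:ℝ)+1) (r := c) (by positivity) hc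
  rw [show ((n:ℝ)+1)-1 = (n:ℝ) by ring] at h
  have h2 : ∫ r in Set.Ioi (0:ℝ), r^n * Real.exp (-(c*r))
      = ∫ t in Set.Ioi (0:ℝ), t ^ ((n:ℝ)) * Real.exp (-(c*t)) := by
    refine setIntegral_congr_fun measurableSet_Ioi (fun t ht => ?_)
    rw [← Real.rpow_natCast t n]
  rw [h2, h, show ((n:ℝ)+1) = ((n+1 : ℕ):ℝ) by push_cast; ring, Real.rpow_natCast]
  rw [show (((n+1:ℕ)):ℝ) = (n:ℝ)+1 by push_cast; ring, Real.Gamma_nat_eq_factorial]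
  rw [div_pow, one_pow]
  ring

lemma gamma_integrable {c : ℝ} (hc : 0 < c) (n : ℕ) :
    IntegrableOn (fun r => r^n * Real.exp (-(c*r))) (Set.Ioi (0:ℝ)) := by
  have h := integrableOn_rpow_mul_exp_neg_mul_rpow (s := (n:ℝ)) (p := 1) (b := c)
    (by linarith [Nat.cast_nonneg (α:=ℝ) n]) zero_lt_one hc
  refine h.congr_fun (fun t ht => ?_) measurableSet_Ioi
  dsimp only
  rw [Real.rpow_natCast, Real.rpow_one, neg_mul]

/-! ### The moment integrals of `K0` -/

lemma Fint {b : ℝ} (hb : 0 < b) (k : ℕ) :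
    Integrable (Function.uncurry (fun t r => r^(2*k+2) * Real.exp (-(b*r*Real.cosh t))))
      ((volume.restrict (Set.Ioi (0:ℝ))).prod (volume.restrict (Set.Ioi (0:ℝ)))) := by
  set F := Function.uncurry (fun t r : ℝ => r^(2*k+2) * Real.exp (-(b*r*Real.cosh t))) with hF
  have hmeas : AEStronglyMeasurable F
      ((volume.restrict (Set.Ioi (0:ℝ))).prod (volume.restrict (Set.Ioi (0:ℝ)))) := by
    apply Continuous.aestronglyMeasurable
    unfold F; unfold Function.uncurry; fun_prop
  rw [integrable_prod_iff hmeas]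
  constructor
  · refine Filter.Eventually.of_forall (fun t => ?_)
    have h := gamma_integrable (c := b * Real.cosh t) (by positivity) (2*k+2)
    refine h.congr_fun (fun r _ => ?_) measurableSet_Ioi
    simp only [hF, Function.uncurry]
    ring_nf
  · have heq : ∀ t : ℝ, (∫ r, ‖F (t, r)‖ ∂(volume.restrict (Set.Ioi (0:ℝ))))
        = ((2*k+2).factorial : ℝ) / b^(2*k+3) * ((Real.cosh t)⁻¹)^(2*(k+1)+1) := by
      intro t
      have h1 : (∫ r, ‖F (t, r)‖ ∂(volume.restrict (Set.Ioi (0:ℝ))))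
          = ∫ r in Set.Ioi (0:ℝ), r^(2*k+2) * Real.exp (-((b*Real.cosh t)*r)) := by
        refine setIntegral_congr_fun measurableSet_Ioi (fun r hr => ?_)
        simp only [hF, Function.uncurry]
        rw [Real.norm_of_nonneg (mul_nonneg (pow_nonneg (le_of_lt hr) _) (Real.exp_nonneg _))]
        ring_nf
      rw [h1, gamma_int (by positivity) (2*k+2), show 2*(k+1)+1 = 2*k+3 by ring,
        mul_pow, inv_pow, div_mul_eq_div_div, div_eq_mul_inv]
    refine Integrable.congr (((sech_integrable (k+1)).const_mul
      (((2*k+2).factorial : ℝ) / b^(2*k+3)))) ?_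
    exact Filter.Eventually.of_forall (fun t => (heq t).symm)

lemma Ik {b : ℝ} (hb : 0 < b) (k : ℕ) :
    ∫ r in Set.Ioi (0:ℝ), r^(2*k+2) * K0 (b*r)
      = ((2*k+2).factorial : ℝ) / b^(2*k+3)
        * (π / 2 * (((2*(k+1)).factorial) : ℝ) / (4^(k+1) * ((k+1).factorial : ℝ)^2)) := by
  have h0 : ∫ r in Set.Ioi (0:ℝ), r^(2*k+2) * K0 (b*r)
      = ∫ r in Set.Ioi (0:ℝ), ∫ t in Set.Ioi (0:ℝ), r^(2*k+2) * Real.exp (-(b*r*Real.cosh t)) := by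
    refine setIntegral_congr_fun measurableSet_Ioi (fun r _ => ?_)
    rw [K0, ← MeasureTheory.integral_const_mul]
  have hswap := (integral_integral_swap (Fint hb k)).symm
  rw [h0, hswap]
  have h1 : ∀ t : ℝ, (∫ r in Set.Ioi (0:ℝ), r^(2*k+2) * Real.exp (-(b*r*Real.cosh t)))
      = ((2*k+2).factorial : ℝ) / b^(2*k+3) * ((Real.cosh t)⁻¹)^(2*(k+1)+1) := by
    intro t
    have h2 : (∫ r in Set.Ioi (0:ℝ), r^(2*k+2) * Real.exp (-(b*r*Real.cosh t)))
        = ∫ r in Set.Ioi (0:ℝ), r^(2*k+2) * Real.exp (-((b*Real.cosh t)*r)) := by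
      refine setIntegral_congr_fun measurableSet_Ioi (fun r _ => ?_)
      ring_nf
    rw [h2, gamma_int (by positivity) (2*k+2), show 2*(k+1)+1 = 2*k+3 by ring,
      mul_pow, inv_pow, div_mul_eq_div_div, div_eq_mul_inv]
  calc (∫ t in Set.Ioi (0:ℝ), ∫ r in Set.Ioi (0:ℝ), r^(2*k+2) * Real.exp (-(b*r*Real.cosh t)))
      = ∫ t in Set.Ioi (0:ℝ), ((2*k+2).factorial : ℝ) / b^(2*k+3) * ((Real.cosh t)⁻¹)^(2*(k+1)+1) :=
        setIntegral_congr_fun measurableSet_Ioi (fun t _ => h1 t)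
    _ = ((2*k+2).factorial : ℝ) / b^(2*k+3)
          * ∫ t in Set.Ioi (0:ℝ), ((Real.cosh t)⁻¹)^(2*(k+1)+1) :=
        MeasureTheory.integral_const_mul _ _
    _ = _ := by rw [sech_closed (k+1)]

lemma Ik_integrable {b : ℝ} (hb : 0 < b) (k : ℕ) :
    IntegrableOn (fun r => r^(2*k+2) * K0 (b*r)) (Set.Ioi (0:ℝ)) := by
  have h := (Fint hb k).integral_prod_right
  refine h.congr (Filter.Eventually.of_forall (fun r => ?_))
  simp only [Function.uncurry]
  rw [K0, ← MeasureTheory.integral_const_mul]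

/-! ### Gamma at half-integers -/

lemma Gamma_add_half (n : ℕ) : Real.Gamma ((n:ℝ) + 1/2)
    = Real.sqrt π * ((2*n).factorial : ℝ) / (4^n * (n.factorial : ℝ)) := by
  induction n with
  | zero =>
    rw [show ((0:ℕ):ℝ) + 1/2 = 1/2 by norm_num, Real.Gamma_one_half_eq]
    norm_num
  | succ k ih =>
    have h : ((k+1:ℕ):ℝ) + 1/2 = ((k:ℝ) + 1/2) + 1 := by push_cast; ring
    rw [h, Real.Gamma_add_one (by positivity), ih]
    have h2 : ((2*(k+1)).factorial : ℝ) = (2*(k:ℝ)+2)*(2*(k:ℝ)+1)*((2*k).factorial : ℝ) := by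
      rw [show 2*(k+1) = (2*k+1)+1 by ring, Nat.factorial_succ, Nat.factorial_succ]
      push_cast; ring
    have h3 : (((k+1)).factorial : ℝ) = ((k:ℝ)+1)*((k).factorial : ℝ) := by
      rw [Nat.factorial_succ]; push_cast; ring
    rw [h2, h3]
    have hk : ((k).factorial : ℝ) ≠ 0 := Nat.cast_ne_zero.mpr (Nat.factorial_ne_zero k)
    have h5 : (4:ℝ)^k ≠ 0 := by positivity
    have h6 : ((k:ℝ)+1) ≠ 0 := by positivity
    field_simp
    ring

end Stmt14Aux

open Stmt14Aux in
theorem stmt14 (a b : ℝ) (ha : 0 ≤ a) (hb : a < b) :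
    ∫ r in Set.Ioi (0:ℝ), r^2 * I0 (a * r) * K0 (b * r)
      = (π / 2) * b⁻¹^3 * twoF1 (3/2) (3/2) 1 (a^2 / b^2) := by
  have hb0 : 0 < b := lt_of_le_of_lt ha hb
  have hbne : b ≠ 0 := hb0.ne'
  set x : ℝ := a^2/b^2 with hxdef
  have hx0 : 0 ≤ x := by positivity
  have hx1 : x < 1 := by
    rw [hxdef, div_lt_one (by positivity)]
    nlinarith
  set c : ℕ → ℝ := fun k => (a^2/4)^k / ((k).factorial : ℝ)^2 with hcdef
  have hc0 : ∀ k, 0 ≤ c k := fun k => by rw [hcdef]; positivity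
  set V : ℕ → ℝ := fun k => ((2*k+2).factorial : ℝ) / b^(2*k+3)
    * (π / 2 * (((2*(k+1)).factorial) : ℝ) / (4^(k+1) * ((k+1).factorial : ℝ)^2)) with hVdef
  set F : ℕ → ℝ → ℝ := fun k r => c k * (r^(2*k+2) * K0 (b*r)) with hFdef
  have hK0 : ∀ y : ℝ, 0 ≤ K0 y := fun y => integral_nonneg (fun t => Real.exp_nonneg _)
  have hFint : ∀ k, Integrable (F k) (volume.restrict (Set.Ioi 0)) :=
    fun k => (Ik_integrable hb0 k).const_mul _
  have hFval : ∀ k, (∫ r in Set.Ioi (0:ℝ), F k r) = c k * V k := fun k => by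
    rw [hFdef]
    simp only []
    rw [MeasureTheory.integral_const_mul, Ik hb0 k, hVdef]
  have hFnorm : ∀ k, (∫ r in Set.Ioi (0:ℝ), ‖F k r‖) = c k * V k := fun k => by
    rw [← hFval k]
    refine setIntegral_congr_fun measurableSet_Ioi (fun r hr => ?_)
    exact Real.norm_of_nonneg (mul_nonneg (hc0 k)
      (mul_nonneg (pow_nonneg (le_of_lt hr) _) (hK0 _)))
  -- Summability
  have hchoose : ∀ k : ℕ, ((2*k+2).choose (k+1) : ℝ) * ((k+1).factorial : ℝ)
      * ((k+1).factorial : ℝ) = ((2*k+2).factorial : ℝ) := by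
    intro k
    have := Nat.choose_mul_factorial_mul_factorial (show k+1 ≤ 2*k+2 by omega)
    rw [show 2*k+2 - (k+1) = k+1 by omega] at this
    exact_mod_cast this
  have hkey : ∀ k : ℕ, c k * V k
      = (π/(2*b^3)) * ((((2*k+2).choose (k+1) : ℝ))^2 * ((k:ℝ)+1)^2 / 4^(2*k+1)) * x^k := by
    intro k
    have hch := hchoose k
    have hf1 : (((k+1)).factorial : ℝ) = ((k:ℝ)+1)*((k).factorial : ℝ) := by
      rw [Nat.factorial_succ]; push_cast; ring
    have h22 : ((2*(k+1)).factorial : ℝ) = ((2*k+2).factorial : ℝ) := by norm_num; ring_nf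
    have hkfne : ((k).factorial : ℝ) ≠ 0 := Nat.cast_ne_zero.mpr (Nat.factorial_ne_zero k)
    simp only [hcdef, hVdef, hxdef]
    rw [h22, ← hch, hf1, div_pow]
    have hbb : b^(k*2) * b⁻¹^(k*2) = 1 := by rw [← mul_pow, mul_inv_cancel₀ hbne, one_pow]
    field_simp
    linear_combination (-(a ^ (k * 2) * ((2*k+2).choose (k+1) : ℝ) ^ 2 * b ^ 3 * 4 ^ (k * 2) * 4)) * hbb
  have hbound : ∀ k : ℕ, c k * V k ≤ (2*π/b^3) * (((k:ℝ)+1)^2 * x^k) := by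
    intro k
    rw [hkey k]
    have hch4 : (((2*k+2).choose (k+1) : ℝ)) ≤ 4^(k+1) := by
      have h1 : (2*k+2).choose (k+1) ≤ 2^(2*k+2) := by
        calc (2*k+2).choose (k+1) ≤ ∑ i ∈ Finset.range (2*k+2+1), (2*k+2).choose i :=
              Finset.single_le_sum (fun i _ => Nat.zero_le _) (by
                simp [Finset.mem_range]; omega)
          _ = 2^(2*k+2) := Nat.sum_range_choose (2*k+2)
      calc (((2*k+2).choose (k+1) : ℝ)) ≤ (2:ℝ)^(2*k+2) := by exact_mod_cast h1
        _ = 4^(k+1) := by rw [show (4:ℝ) = 2^2 by norm_num, ← pow_mul]; ring_nf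
    have hA : (((2*k+2).choose (k+1) : ℝ))^2 * ((k:ℝ)+1)^2 / 4^(2*k+1)
        ≤ 4 * ((k:ℝ)+1)^2 := by
      rw [div_le_iff₀ (by positivity)]
      have h2 : (((2*k+2).choose (k+1) : ℝ))^2 ≤ (4^(k+1))^2 := by
        have hnn : (0:ℝ) ≤ ((2*k+2).choose (k+1) : ℝ) := Nat.cast_nonneg _
        exact pow_le_pow_left₀ hnn hch4 2
      have h3 : ((4:ℝ)^(k+1))^2 = 4 * 4^(2*k+1) := by
        rw [← pow_mul, show (k+1)*2 = (2*k+1)+1 by ring, pow_succ]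
        ring
      calc (((2*k+2).choose (k+1) : ℝ))^2 * ((k:ℝ)+1)^2
          ≤ (4^(k+1))^2 * ((k:ℝ)+1)^2 := by
            exact mul_le_mul_of_nonneg_right h2 (by positivity)
        _ = 4 * ((k:ℝ)+1)^2 * 4^(2*k+1) := by rw [h3]; ring
    calc (π/(2*b^3)) * ((((2*k+2).choose (k+1) : ℝ))^2 * ((k:ℝ)+1)^2 / 4^(2*k+1)) * x^k
        ≤ (π/(2*b^3)) * (4 * ((k:ℝ)+1)^2) * x^k := by
          refine mul_le_mul_of_nonneg_right (mul_le_mul_of_nonneg_left hA (by positivity))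
            (by positivity)
      _ = (2*π/b^3) * (((k:ℝ)+1)^2 * x^k) := by ring
  have hgsum : Summable (fun k : ℕ => (2*π/b^3) * (((k:ℝ)+1)^2 * x^k)) := by
    apply Summable.mul_left
    have hxn : ‖x‖ < 1 := by rwa [Real.norm_of_nonneg hx0]
    have h2 := summable_pow_mul_geometric_of_norm_lt_one 2 hxn (R := ℝ)
    have h1 := summable_pow_mul_geometric_of_norm_lt_one 1 hxn (R := ℝ)
    have h0 := summable_pow_mul_geometric_of_norm_lt_one 0 hxn (R := ℝ)
    have := (h2.add ((h1.mul_left 2).add h0))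
    refine this.congr (fun k => ?_)
    push_cast
    ring
  have hsum : Summable (fun k => ∫ r in Set.Ioi (0:ℝ), ‖F k r‖) := by
    refine Summable.of_nonneg_of_le (fun k => integral_nonneg (fun r => norm_nonneg _))
      (fun k => ?_) hgsum
    rw [hFnorm k]
    exact hbound k
  have hswap := integral_tsum_of_summable_integral_norm hFint hsum
  -- integrand identity
  have hintegrand : ∀ r ∈ Set.Ioi (0:ℝ), r^2 * I0 (a*r) * K0 (b*r) = ∑' k, F k r := by
    intro r _
    have h1 : r^2 * I0 (a*r) * K0 (b*r)
        = (∑' k : ℕ, ((a*r)^2/4)^k / ((k).factorial : ℝ)^2) * (r^2 * K0 (b*r)) := by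
      rw [I0]; ring
    rw [h1, ← tsum_mul_right]
    refine tsum_congr (fun k => ?_)
    rw [hFdef, hcdef]
    simp only []
    rw [show ((a*r)^2/4) = (a^2/4) * r^2 by ring, mul_pow, ← pow_mul,
      show 2*k+2 = 2*k + 2 from rfl, pow_add]
    ring_nf
  calc (∫ r in Set.Ioi (0:ℝ), r^2 * I0 (a * r) * K0 (b * r))
      = ∫ r in Set.Ioi (0:ℝ), ∑' k, F k r :=
        setIntegral_congr_fun measurableSet_Ioi hintegrand
    _ = ∑' k, ∫ r in Set.Ioi (0:ℝ), F k r := hswap.symm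
    _ = ∑' k, c k * V k := tsum_congr hFval
    _ = (π / 2) * b⁻¹^3 * twoF1 (3/2) (3/2) 1 x := by
        rw [twoF1, ← tsum_mul_left, ← tsum_mul_left]
        refine tsum_congr (fun k => ?_)
        have hG32 : Real.Gamma (3/2 : ℝ) = Real.sqrt π / 2 := by
          have := Gamma_add_half 1
          rw [show ((1:ℕ):ℝ) + 1/2 = 3/2 by norm_num] at this
          rw [this]
          norm_num [Nat.factorial]
          ring
        have hGk : Real.Gamma ((k:ℕ) + (3/2 : ℝ))
            = Real.sqrt π * ((2*(k+1)).factorial : ℝ) / (4^(k+1) * ((k+1).factorial : ℝ)) := by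
          have := Gamma_add_half (k+1)
          rw [show (((k+1):ℕ):ℝ) + 1/2 = (k:ℕ) + (3/2:ℝ) by push_cast; ring] at this
          exact this
        have hGk1 : Real.Gamma ((k:ℕ) + (1 : ℝ)) = ((k).factorial : ℝ) :=
          Real.Gamma_nat_eq_factorial k
        have hsqpi : Real.sqrt π * Real.sqrt π = π := Real.mul_self_sqrt Real.pi_pos.le
        have h22 : ((2*(k+1)).factorial : ℝ) = ((2*k+2).factorial : ℝ) := by norm_num; ring_nf
        have hkfne : ((k).factorial : ℝ) ≠ 0 := Nat.cast_ne_zero.mpr (Nat.factorial_ne_zero k)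
        have hk1fne : (((k+1)).factorial : ℝ) ≠ 0 := Nat.cast_ne_zero.mpr (Nat.factorial_ne_zero _)
        have hGk2 : Real.Gamma ((k:ℕ) + (3/2 : ℝ)) * Real.Gamma ((k:ℕ) + (3/2 : ℝ))
            = π * (((2*k+2).factorial : ℝ))^2 / (4^(k+1) * ((k+1).factorial : ℝ))^2 := by
          rw [hGk, h22, div_mul_div_comm, mul_mul_mul_comm, hsqpi]; ring
        have hG32sq : Real.Gamma (3/2 : ℝ) * Real.Gamma (3/2 : ℝ) = π / 4 := by
          rw [hG32, div_mul_div_comm, hsqpi]; norm_num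
        rw [Real.Gamma_one, hGk2, hG32sq, hGk1]
        simp only [hcdef, hVdef, hxdef]
        rw [h22]
        have hbb : b^(k*2) * b⁻¹^(k*2) = 1 := by rw [← mul_pow, mul_inv_cancel₀ hbne, one_pow]
        have h4 : (1/4:ℝ)^k * 4^k = 1 := by rw [← mul_pow]; norm_num
        field_simp
        linear_combination (a^(k*2)*b^3*4) * h4 - (a^(k*2)*b^3*4) * hbb
end
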